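/- Let a₀, b₀, a₁ be a V-path in which a₀ is a face sequence of type 5. Then a₁ is of type 1 or of type 6. -/

import Mathlib

set_option linter.unusedVariables false

/-- The alphabet `{0, 1, ∗}` for face sequences. -/
inductive Letter : Type
  | zero
  | one
  | star
  deriving DecidableEq

/-- A sequence of length `n` over the alphabet `{0, 1, ∗}`. -/
abbrev FSeq (n : ℕ) := Fin n → Letter

/-- `S(1)`, the number of `1`'s in `S`. -/
def count1 {n : ℕ} (S : FSeq n) : ℕ := (Finset.univ.filter fun i => S i = Letter.one).card

/-- `S(0)`, the number of `0`'s in `S`. -/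
def count0 {n : ℕ} (S : FSeq n) : ℕ := (Finset.univ.filter fun i => S i = Letter.zero).card

/-- The number of `∗`'s in `S`. -/
def countStar {n : ℕ} (S : FSeq n) : ℕ := (Finset.univ.filter fun i => S i = Letter.star).card

/-- A face sequence: either no `∗` and exactly `k` ones, or at most `k-1` ones and
(#ones) + (#stars) ≥ `k+1`. -/
def FaceSeq {n : ℕ} (k : ℕ) (S : FSeq n) : Prop :=
  (countStar S = 0 ∧ count1 S = k) ∨ (count1 S + 1 ≤ k ∧ k + 1 ≤ count1 S + countStar S)

/-- `v₀`, the sequence of `k` ones followed by `n - k` zeros. -/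
def v0seq (n k : ℕ) : FSeq n := fun i => if (i : ℕ) < k then Letter.one else Letter.zero

/-- `S` contains at least one `∗`. -/
def hasStar {n : ℕ} (S : FSeq n) : Prop := ∃ i, S i = Letter.star

/-- There is a `1` to the right of the rightmost `∗` (in particular `S` contains a `∗`). -/
def OneRight {n : ℕ} (S : FSeq n) : Prop :=
  hasStar S ∧ ∃ i, S i = Letter.one ∧ ∀ j, i < j → S j ≠ Letter.star

/-- There is no `1` to the right of the rightmost `∗` (and `S` contains a `∗`). -/
def NoOneRight {n : ℕ} (S : FSeq n) : Prop :=
  hasStar S ∧ ∀ i, S i = Letter.one → ∃ j, i < j ∧ S j = Letter.star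

/-- There is a `0` to the left of the leftmost `∗` (in particular `S` contains a `∗`). -/
def ZeroLeft {n : ℕ} (S : FSeq n) : Prop :=
  hasStar S ∧ ∃ i, S i = Letter.zero ∧ ∀ j, j < i → S j ≠ Letter.star

/-- There is no `0` to the left of the leftmost `∗` (and `S` contains a `∗`). -/
def NoZeroLeft {n : ℕ} (S : FSeq n) : Prop :=
  hasStar S ∧ ∀ i, S i = Letter.zero → ∃ j, j < i ∧ S j = Letter.star

/-- `i` is the position of the rightmost `1` of `S`. -/
def IsRightmostOne {n : ℕ} (S : FSeq n) (i : Fin n) : Prop :=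
  S i = Letter.one ∧ ∀ j, i < j → S j ≠ Letter.one

/-- `i` is the position of the rightmost `∗` of `S`. -/
def IsRightmostStar {n : ℕ} (S : FSeq n) (i : Fin n) : Prop :=
  S i = Letter.star ∧ ∀ j, i < j → S j ≠ Letter.star

/-- `i` is the position of the leftmost `0` of `S`. -/
def IsLeftmostZero {n : ℕ} (S : FSeq n) (i : Fin n) : Prop :=
  S i = Letter.zero ∧ ∀ j, j < i → S j ≠ Letter.zero

/-- `i` is the position of the leftmost `∗` of `S`. -/
def IsLeftmostStar {n : ℕ} (S : FSeq n) (i : Fin n) : Prop :=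
  S i = Letter.star ∧ ∀ j, j < i → S j ≠ Letter.star

/-- Condition of rule (1), subcondition (a). -/
def Cond1a {n : ℕ} (k m0 m1 : ℕ) (S : FSeq n) : Prop :=
  count1 S + 1 ≤ k ∧ OneRight S ∧ count1 S ≠ m1

/-- Condition of rule (1), subcondition (b). -/
def Cond1b {n : ℕ} (k m0 m1 : ℕ) (S : FSeq n) : Prop :=
  count1 S + 1 ≤ k ∧ OneRight S ∧ count1 S = m1 ∧ m0 < count0 S

/-- Condition of rule (1), subcondition (c): no `0` to the left of the leftmost `∗`. -/
def Cond1c {n : ℕ} (k m0 m1 : ℕ) (S : FSeq n) : Prop :=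
  count1 S + 1 ≤ k ∧ OneRight S ∧ count1 S = m1 ∧ count0 S = m0 ∧ NoZeroLeft S

/-- Condition of rule (2), subcondition (a): here `count1 S + 1 ≠ m1` encodes `S(1) ≠ m₁ - 1`. -/
def Cond2a {n : ℕ} (k m0 m1 : ℕ) (S : FSeq n) : Prop :=
  count1 S + 2 ≤ k ∧ NoOneRight S ∧ count1 S + 1 ≠ m1

/-- Condition of rule (2), subcondition (b). -/
def Cond2b {n : ℕ} (k m0 m1 : ℕ) (S : FSeq n) : Prop :=
  count1 S + 2 ≤ k ∧ NoOneRight S ∧ count1 S + 1 = m1 ∧ m0 < count0 S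

/-- Condition of rule (2), subcondition (c). -/
def Cond2c {n : ℕ} (k m0 m1 : ℕ) (S : FSeq n) : Prop :=
  count1 S + 2 ≤ k ∧ NoOneRight S ∧ count1 S + 1 = m1 ∧ count0 S = m0 ∧ NoZeroLeft S

/-- `S` is of type 1 (satisfies the condition of rule (1)). -/
def Type1 {n : ℕ} (k m0 m1 : ℕ) (S : FSeq n) : Prop :=
  Cond1a k m0 m1 S ∨ Cond1b k m0 m1 S ∨ Cond1c k m0 m1 S

/-- `S` is of type 2 (satisfies the condition of rule (2)). -/
def Type2 {n : ℕ} (k m0 m1 : ℕ) (S : FSeq n) : Prop :=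
  Cond2a k m0 m1 S ∨ Cond2b k m0 m1 S ∨ Cond2c k m0 m1 S

/-- `S` is of type 3: `S(1) = k-1`, `S(0) ≤ n-k-1`, no `1` right of the rightmost `∗`,
a `0` left of the leftmost `∗`. -/
def Type3 {n : ℕ} (k : ℕ) (S : FSeq n) : Prop :=
  count1 S + 1 = k ∧ count0 S + k + 1 ≤ n ∧ NoOneRight S ∧ ZeroLeft S

/-- `S` is of type 4: `S(1) = k-1`, `S(0) ≤ n-k-2`, no `1` right of the rightmost `∗`,
no `0` left of the leftmost `∗`. -/
def Type4 {n : ℕ} (k : ℕ) (S : FSeq n) : Prop :=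
  count1 S + 1 = k ∧ count0 S + k + 2 ≤ n ∧ NoOneRight S ∧ NoZeroLeft S

/-- `S` is of type 5: `S(1) = m₁`, `S(0) ≤ m₀`, a `1` right of the rightmost `∗`,
a `0` left of the leftmost `∗`. -/
def Type5 {n : ℕ} (m0 m1 : ℕ) (S : FSeq n) : Prop :=
  count1 S = m1 ∧ count0 S ≤ m0 ∧ OneRight S ∧ ZeroLeft S

/-- `S` is of type 6: `S(1) = m₁`, `S(0) < m₀`, a `1` right of the rightmost `∗`,
no `0` left of the leftmost `∗`. -/
def Type6 {n : ℕ} (m0 m1 : ℕ) (S : FSeq n) : Prop :=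
  count1 S = m1 ∧ count0 S < m0 ∧ OneRight S ∧ NoZeroLeft S

/-- `S` is of type 7: `S(1) = m₁-1`, `S(0) ≤ m₀`, no `1` right of the rightmost `∗`,
a `0` left of the leftmost `∗`. -/
def Type7 {n : ℕ} (m0 m1 : ℕ) (S : FSeq n) : Prop :=
  count1 S + 1 = m1 ∧ count0 S ≤ m0 ∧ NoOneRight S ∧ ZeroLeft S

/-- `S` is of type 8: `S(1) = m₁-1`, `S(0) < m₀`, no `1` right of the rightmost `∗`,
no `0` left of the leftmost `∗`. -/
def Type8 {n : ℕ} (m0 m1 : ℕ) (S : FSeq n) : Prop :=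
  count1 S + 1 = m1 ∧ count0 S < m0 ∧ NoOneRight S ∧ NoZeroLeft S

/-- `S` is of type 9: `S(1) = k`, `S(0) = n-k`, and `S ≠ v₀`. -/
def Type9 {n : ℕ} (k : ℕ) (S : FSeq n) : Prop :=
  count1 S = k ∧ count0 S + k = n ∧ S ≠ v0seq n k

/-- `S` is of type 10: `S(1) = k-1`, `S(0) = n-k-1`, no `1` right of the rightmost `∗`,
no `0` left of the leftmost `∗`. -/
def Type10 {n : ℕ} (k : ℕ) (S : FSeq n) : Prop :=
  count1 S + 1 = k ∧ count0 S + k + 1 = n ∧ NoOneRight S ∧ NoZeroLeft S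

/-- `S` is of type `i` for `1 ≤ i ≤ 10` (and of no type otherwise). -/
def OfType {n : ℕ} (k m0 m1 : ℕ) (i : ℕ) (S : FSeq n) : Prop :=
  match i with
  | 1 => Type1 k m0 m1 S
  | 2 => Type2 k m0 m1 S
  | 3 => Type3 k S
  | 4 => Type4 k S
  | 5 => Type5 m0 m1 S
  | 6 => Type6 m0 m1 S
  | 7 => Type7 m0 m1 S
  | 8 => Type8 m0 m1 S
  | 9 => Type9 k S
  | 10 => Type10 k S
  | _ => False

/-- The replacement of rule (1): replace the rightmost `1` with `∗`. -/
def Apply1 {n : ℕ} (S S' : FSeq n) : Prop :=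
  ∃ i, IsRightmostOne S i ∧ S' = Function.update S i Letter.star

/-- The replacement of rule (2): replace the rightmost `∗` with `1`. -/
def Apply2 {n : ℕ} (S S' : FSeq n) : Prop :=
  ∃ i, IsRightmostStar S i ∧ S' = Function.update S i Letter.one

/-- The replacement of rules (3), (5) and (7): replace the leftmost `0` with `∗`. -/
def Apply3 {n : ℕ} (S S' : FSeq n) : Prop :=
  ∃ i, IsLeftmostZero S i ∧ S' = Function.update S i Letter.star

/-- The replacement of rules (4), (6) and (8): replace the leftmost `∗` with `0`. -/
def Apply4 {n : ℕ} (S S' : FSeq n) : Prop :=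
  ∃ i, IsLeftmostStar S i ∧ S' = Function.update S i Letter.zero

/-- The replacement of rule (9): replace the leftmost `0` and the rightmost `1` each with `∗`. -/
def Apply9 {n : ℕ} (S S' : FSeq n) : Prop :=
  ∃ i j, IsLeftmostZero S i ∧ IsRightmostOne S j ∧
    S' = Function.update (Function.update S i Letter.star) j Letter.star

/-- The replacement of rule (10): replace the leftmost `∗` with `0` and the other `∗` with `1`. -/
def Apply10 {n : ℕ} (S S' : FSeq n) : Prop :=
  ∃ i j, IsLeftmostStar S i ∧ IsRightmostStar S j ∧ i ≠ j ∧
    S' = Function.update (Function.update S i Letter.zero) j Letter.one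

/-- The matching `V` on face sequences: a face sequence `S` of type 1, 3, 5, 7 or 9 is
matched with the result `S'` of applying the corresponding rule to it. -/
def Vmatch {n : ℕ} (k m0 m1 : ℕ) (S S' : FSeq n) : Prop :=
  FaceSeq k S ∧
    ((Type1 k m0 m1 S ∧ Apply1 S S') ∨
     (Type3 k S ∧ Apply3 S S') ∨
     (Type5 m0 m1 S ∧ Apply3 S S') ∨
     (Type7 m0 m1 S ∧ Apply3 S S') ∨
     (Type9 k S ∧ Apply9 S S'))

/-- The vertex set of a face sequence `S`: the vertex sequences (0/1-sequences with
exactly `k` ones) agreeing with `S` wherever `S` is not `∗`. -/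
def VertexSet {n : ℕ} (k : ℕ) (S : FSeq n) : Set (FSeq n) :=
  {v | (∀ i, v i ≠ Letter.star) ∧ count1 v = k ∧ ∀ i, S i ≠ Letter.star → v i = S i}

/-- The dimension of the face `F(S)`. -/
def fdim {n : ℕ} (S : FSeq n) : ℕ :=
  if countStar S = 0 then 0 else countStar S - 1

/-- `T` is a codimension-1 face of `S`. -/
def Codim1 {n : ℕ} (k : ℕ) (T S : FSeq n) : Prop :=
  VertexSet k T ⊂ VertexSet k S ∧ fdim T + 1 = fdim S

/-- A (nontrivial) `V`-path `a₀, b₀, a₁, b₁, …, b_r, a_{r+1}` of face sequences. -/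
structure VPath (n k m0 m1 r : ℕ) where
  a : Fin (r + 2) → FSeq n
  b : Fin (r + 1) → FSeq n
  face_a : ∀ i, FaceSeq k (a i)
  face_b : ∀ i, FaceSeq k (b i)
  mem : ∀ i : Fin (r + 1), Vmatch k m0 m1 (a i.castSucc) (b i)
  codim_left : ∀ i : Fin (r + 1), Codim1 k (a i.castSucc) (b i)
  codim_right : ∀ i : Fin (r + 1), Codim1 k (a i.succ) (b i)
  step_ne : ∀ i : Fin (r + 1), a i.castSucc ≠ a i.succ

section Helpers

open Finset

lemma cnt_update {n : ℕ} (S : FSeq n) (i : Fin n) (c ℓ : Letter) :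
    (univ.filter fun j => Function.update S i c j = ℓ).card + (if S i = ℓ then 1 else 0)
      = (univ.filter fun j => S j = ℓ).card + (if c = ℓ then 1 else 0) := by
  classical
  have h1 : ∀ (T : FSeq n), (univ.filter fun j => T j = ℓ).card
      = ∑ j, if T j = ℓ then 1 else 0 := by
    intro T; rw [Finset.card_filter]
  rw [h1, h1]
  have h2 : (fun j => if Function.update S i c j = ℓ then 1 else 0)
      = Function.update (fun j => if S j = ℓ then 1 else 0) i (if c = ℓ then 1 else 0) := by
    funext j
    by_cases hj : j = i
    · subst hj; simp
    · simp [Function.update_of_ne hj]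
  rw [h2, Finset.sum_update_of_mem (mem_univ i),
      Finset.sum_eq_sum_sdiff_singleton_add (mem_univ i) (fun j => if S j = ℓ then 1 else 0)]
  ring

lemma hasStar_of_pos {n : ℕ} {S : FSeq n} (h : 0 < countStar S) : hasStar S := by
  obtain ⟨i, hi⟩ := Finset.card_pos.mp h
  exact ⟨i, (Finset.mem_filter.mp hi).2⟩

lemma pos_of_hasStar {n : ℕ} {S : FSeq n} (h : hasStar S) : 0 < countStar S := by
  obtain ⟨i, hi⟩ := h
  exact Finset.card_pos.mpr ⟨i, Finset.mem_filter.mpr ⟨Finset.mem_univ i, hi⟩⟩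

lemma vertex_of_subset {n k : ℕ} (T : FSeq n) (A : Finset (Fin n))
    (hA : A ⊆ univ.filter fun j => T j = Letter.star) (hcard : A.card + count1 T = k) :
    (fun j => if j ∈ A then Letter.one else if T j = Letter.star then Letter.zero else T j)
      ∈ VertexSet k T := by
  classical
  have hAst : ∀ j ∈ A, T j = Letter.star := fun j hj => (Finset.mem_filter.mp (hA hj)).2
  refine ⟨?_, ?_, ?_⟩
  · intro j
    by_cases h1 : j ∈ A
    · simp [h1]
    · by_cases h2 : T j = Letter.star
      · simp [h1, h2]
      · simp [h1, h2]
  · show (univ.filter fun j =>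
        (if j ∈ A then Letter.one else if T j = Letter.star then Letter.zero else T j)
          = Letter.one).card = k
    have hset : (univ.filter fun j =>
        (if j ∈ A then Letter.one else if T j = Letter.star then Letter.zero else T j)
          = Letter.one) = A ∪ (univ.filter fun j => T j = Letter.one) := by
      ext j
      simp only [mem_filter, mem_univ, true_and, mem_union]
      constructor
      · intro h
        by_cases h1 : j ∈ A
        · exact Or.inl h1
        · by_cases h2 : T j = Letter.star
          · simp [h1, h2] at h
          · right; simpa [h1, h2] using h
      · rintro (h1 | h1)
        · simp [h1]
        · have hns : T j ≠ Letter.star := by rw [h1]; intro h; cases h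
          have h1' : j ∉ A := fun hj => hns (hAst j hj)
          simp [h1', hns, h1]
    have hdisj : Disjoint A (univ.filter fun j => T j = Letter.one) := by
      rw [Finset.disjoint_left]
      intro j hj hj'
      have := hAst j hj
      have := (Finset.mem_filter.mp hj').2
      simp_all
    rw [hset, Finset.card_union_of_disjoint hdisj]
    exact hcard
  · intro j hj
    have h1' : j ∉ A := fun h => hj (hAst j h)
    simp [h1', hj]

lemma exists_vertex_one {n k : ℕ} (T : FSeq n)
    (h1 : count1 T + 1 ≤ k) (h2 : k + 1 ≤ count1 T + countStar T)
    (i : Fin n) (hi : T i = Letter.star) :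
    ∃ v ∈ VertexSet k T, v i = Letter.one := by
  classical
  set St := univ.filter fun j => T j = Letter.star with hSt
  have hiSt : i ∈ St := Finset.mem_filter.mpr ⟨Finset.mem_univ i, hi⟩
  have hcardSt : St.card = countStar T := rfl
  have hle : k - count1 T - 1 ≤ (St.erase i).card := by
    rw [Finset.card_erase_of_mem hiSt, hcardSt]; omega
  obtain ⟨B, hBsub, hBcard⟩ := Finset.exists_subset_card_eq hle
  have hiB : i ∉ B := fun h => (Finset.mem_erase.mp (hBsub h)).1 rfl
  refine ⟨_, vertex_of_subset T (insert i B) ?_ ?_, ?_⟩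
  · intro j hj
    rcases Finset.mem_insert.mp hj with h | h
    · exact h ▸ hiSt
    · exact Finset.mem_of_mem_erase (hBsub h)
  · rw [Finset.card_insert_of_notMem hiB, hBcard]; omega
  · simp

lemma exists_vertex_zero {n k : ℕ} (T : FSeq n)
    (h1 : count1 T + 1 ≤ k) (h2 : k + 1 ≤ count1 T + countStar T)
    (i : Fin n) (hi : T i = Letter.star) :
    ∃ v ∈ VertexSet k T, v i = Letter.zero := by
  classical
  set St := univ.filter fun j => T j = Letter.star with hSt
  have hiSt : i ∈ St := Finset.mem_filter.mpr ⟨Finset.mem_univ i, hi⟩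
  have hcardSt : St.card = countStar T := rfl
  have hle : k - count1 T ≤ (St.erase i).card := by
    rw [Finset.card_erase_of_mem hiSt, hcardSt]; omega
  obtain ⟨A, hAsub, hAcard⟩ := Finset.exists_subset_card_eq hle
  have hiA : i ∉ A := fun h => (Finset.mem_erase.mp (hAsub h)).1 rfl
  refine ⟨_, vertex_of_subset T A (fun j hj => Finset.mem_of_mem_erase (hAsub hj)) ?_, ?_⟩
  · rw [hAcard]; omega
  · simp [hiA, hi]

lemma subset_star {n k : ℕ} {T S : FSeq n}
    (hT1 : count1 T + 1 ≤ k) (hT2 : k + 1 ≤ count1 T + countStar T)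
    (hsub : VertexSet k T ⊆ VertexSet k S) :
    (∀ i, T i = Letter.star → S i = Letter.star) ∧ (∀ i, S i ≠ Letter.star → T i = S i) := by
  constructor
  · intro i hi
    by_contra hSi
    obtain ⟨v, hv, hv1⟩ := exists_vertex_one T hT1 hT2 i hi
    obtain ⟨w, hw, hw0⟩ := exists_vertex_zero T hT1 hT2 i hi
    have h1 : v i = S i := (hsub hv).2.2 i hSi
    have h2 : w i = S i := (hsub hw).2.2 i hSi
    rw [hv1] at h1; rw [hw0] at h2; rw [← h1] at h2; cases h2
  · intro i hSi
    have hTstar : 0 < countStar T := by omega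
    obtain ⟨q, hq⟩ := hasStar_of_pos hTstar
    obtain ⟨v, hv, _⟩ := exists_vertex_one T hT1 hT2 q hq
    have hTi : T i ≠ Letter.star := by
      intro h
      by_contra _
      obtain ⟨v', hv', hv1'⟩ := exists_vertex_one T hT1 hT2 i h
      obtain ⟨w', hw', hw0'⟩ := exists_vertex_zero T hT1 hT2 i h
      have h1 : v' i = S i := (hsub hv').2.2 i hSi
      have h2 : w' i = S i := (hsub hw').2.2 i hSi
      rw [hv1'] at h1; rw [hw0'] at h2; rw [← h1] at h2; cases h2
    have h1 : v i = T i := hv.2.2 i hTi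
    have h2 : v i = S i := (hsub hv).2.2 i hSi
    rw [← h1, h2]

end Helpers
/-- In a `V`-path `a₀, b₀, a₁` with `a₀` of type 5, the face `a₁` is of
type 1 or of type 6. -/
theorem vpath_from_type5 (n k m0 m1 : ℕ) (hk1 : 1 ≤ k) (hk2 : k ≤ n - 1)
    (hm0 : m0 + k + 1 ≤ n) (hm1l : 1 ≤ m1) (hm1u : m1 + 1 ≤ k)
    (P : VPath n k m0 m1 0) (h0 : Type5 m0 m1 (P.a 0)) :
    Type1 k m0 m1 (P.a 1) ∨ Type6 m0 m1 (P.a 1) := by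
  classical
  have e0 : (Fin.castSucc (0 : Fin 1)) = (0 : Fin 2) := rfl
  have e1 : (Fin.succ (0 : Fin 1)) = (1 : Fin 2) := rfl
  set a0 := P.a 0 with ha0
  set a1 := P.a 1 with ha1
  set b0 := P.b 0 with hb0
  obtain ⟨hc1, hc0, hOR, hZL⟩ := h0
  have hm := P.mem 0
  rw [e0] at hm
  rw [← ha0, ← hb0] at hm
  have hstep := P.step_ne 0
  rw [e0, e1] at hstep
  rw [← ha0, ← ha1] at hstep
  have hcr := P.codim_right 0
  rw [e1] at hcr
  rw [← ha1, ← hb0] at hcr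
  -- the match must come from rule (5)
  obtain ⟨hface0, hrule⟩ := hm
  have hApply : Apply3 a0 b0 := by
    rcases hrule with ⟨ht, _⟩ | ⟨ht, _⟩ | ⟨_, h⟩ | ⟨ht, _⟩ | ⟨ht, _⟩
    · exfalso
      rcases ht with ⟨_, _, hne⟩ | ⟨_, _, _, hgt⟩ | ⟨_, _, _, _, hNZL⟩
      · exact hne hc1
      · omega
      · obtain ⟨_, z, hz0, hznl⟩ := hZL
        obtain ⟨j, hj, hst⟩ := hNZL.2 z hz0
        exact hznl j hj hst
    · exfalso
      obtain ⟨_, _, hNOR, _⟩ := ht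
      obtain ⟨_, i, hi1, hirt⟩ := hOR
      obtain ⟨j, hij, hst⟩ := hNOR.2 i hi1
      exact hirt j hij hst
    · exact h
    · exfalso; obtain ⟨h71, _⟩ := ht; omega
    · exfalso; obtain ⟨h91, _⟩ := ht; omega
  obtain ⟨i0, ⟨hi00, hi0min⟩, hb⟩ := hApply
  -- positions left of i0 carry 1's; stars of a0 are right of i0
  have hone : ∀ j, j < i0 → a0 j = Letter.one := by
    intro j hj
    obtain ⟨_, z, hz0, hznl⟩ := hZL
    have hi0z : i0 ≤ z := by
      by_contra h
      exact hi0min z (lt_of_not_ge h) hz0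
    have h1 : a0 j ≠ Letter.star := hznl j (lt_of_lt_of_le hj hi0z)
    have h2 : a0 j ≠ Letter.zero := hi0min j hj
    cases h : a0 j <;> simp_all
  have hstar_gt : ∀ q, a0 q = Letter.star → i0 < q := by
    intro q hq
    rcases lt_trichotomy q i0 with h | h | h
    · rw [hone q h] at hq; cases hq
    · rw [h, hi00] at hq; cases hq
    · exact h
  -- star counts
  have hstar0 : 0 < countStar a0 := pos_of_hasStar hOR.1
  have hface0' : count1 a0 + 1 ≤ k ∧ k + 1 ≤ count1 a0 + countStar a0 := by
    rcases hface0 with ⟨hz, _⟩ | h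
    · omega
    · exact h
  have hstar2 : 2 ≤ countStar a0 := by omega
  -- counts of b0
  have hcnt1b : count1 b0 = count1 a0 := by
    have := cnt_update a0 i0 Letter.star Letter.one
    rw [← hb] at this
    simp only [hi00] at this
    simpa [count1] using this
  have hcnt0b : count0 b0 + 1 = count0 a0 := by
    have := cnt_update a0 i0 Letter.star Letter.zero
    rw [← hb] at this
    simp only [hi00] at this
    simpa [count0] using this
  have hcntsb : countStar b0 = countStar a0 + 1 := by
    have := cnt_update a0 i0 Letter.star Letter.star
    rw [← hb] at this
    simp only [hi00] at this
    simpa [countStar] using this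
  -- from fdim: countStar a1 = countStar b0 - 1
  have hfd := hcr.2
  have hcntsa1 : countStar a1 + 1 = countStar b0 := by
    unfold fdim at hfd
    split_ifs at hfd <;> omega
  have hstara1 : 2 ≤ countStar a1 := by omega
  -- a1 is a face sequence
  have hfacea1 := P.face_a 1
  rw [← ha1] at hfacea1
  have hA1 : count1 a1 + 1 ≤ k ∧ k + 1 ≤ count1 a1 + countStar a1 := by
    rcases hfacea1 with ⟨hz, _⟩ | h
    · omega
    · exact h
  -- structure of a1 relative to b0
  have hsub : VertexSet k a1 ⊆ VertexSet k b0 := hcr.1.subset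
  obtain ⟨hstsub, hagree⟩ := subset_star hA1.1 hA1.2 hsub
  -- find the unique star of b0 that is not a star of a1
  have hSsub : (Finset.univ.filter fun j => a1 j = Letter.star)
      ⊆ (Finset.univ.filter fun j => b0 j = Letter.star) := by
    intro j hj
    rw [Finset.mem_filter] at *
    exact ⟨hj.1, hstsub j hj.2⟩
  have hdiffcard : ((Finset.univ.filter fun j => b0 j = Letter.star)
      \ (Finset.univ.filter fun j => a1 j = Letter.star)).card = 1 := by
    rw [Finset.card_sdiff_of_subset hSsub]
    show countStar b0 - countStar a1 = 1
    omega
  obtain ⟨p, hp⟩ := Finset.card_eq_one.mp hdiffcard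
  have hpmem : p ∈ (Finset.univ.filter fun j => b0 j = Letter.star)
      \ (Finset.univ.filter fun j => a1 j = Letter.star) := hp ▸ Finset.mem_singleton_self p
  rw [Finset.mem_sdiff, Finset.mem_filter, Finset.mem_filter] at hpmem
  have hbp : b0 p = Letter.star := hpmem.1.2
  have ha1p : a1 p ≠ Letter.star := fun h => hpmem.2 ⟨Finset.mem_univ p, h⟩
  have he : ∀ j, j ≠ p → a1 j = b0 j := by
    intro j hj
    by_cases hbj : b0 j = Letter.star
    · by_cases haj : a1 j = Letter.star
      · rw [haj, hbj]
      · exfalso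
        have : j ∈ ({p} : Finset (Fin n)) := by
          rw [← hp, Finset.mem_sdiff, Finset.mem_filter, Finset.mem_filter]
          exact ⟨⟨Finset.mem_univ j, hbj⟩, fun h => haj h.2⟩
        exact hj (Finset.mem_singleton.mp this)
    · exact hagree j hbj
  have ha1eq : a1 = Function.update b0 p (a1 p) := by
    funext j
    by_cases hj : j = p
    · subst hj; simp
    · rw [Function.update_of_ne hj]; exact he j hj
  -- b0 at positions: b0 i0 = star; b0 j = a0 j for j ≠ i0
  have hbi0 : b0 i0 = Letter.star := by rw [hb]; simp
  have hbother : ∀ j, j ≠ i0 → b0 j = a0 j := by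
    intro j hj; rw [hb, Function.update_of_ne hj]
  -- OneRight a1
  have hORa1 : OneRight a1 := by
    obtain ⟨hs, i, hi1, hirt⟩ := hOR
    have hii0 : i ≠ i0 := by
      intro h; rw [h, hi00] at hi1; cases hi1
    have hbi : b0 i = Letter.one := by rw [hbother i hii0]; exact hi1
    have hpi : p ≠ i := by
      intro h; rw [h, hbi] at hbp; cases hbp
    -- i0 < i
    obtain ⟨q, hq⟩ := hs
    have hqgt : i0 < q := hstar_gt q hq
    have hqle : q < i := by
      rcases lt_trichotomy q i with h | h | h
      · exact h
      · rw [h, hi1] at hq; cases hq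
      · exact absurd hq (hirt q h)
    have hi0i : i0 < i := lt_trans hqgt hqle
    refine ⟨hasStar_of_pos (by omega), i, ?_, ?_⟩
    · rw [he i (fun h => hpi h.symm)]; exact hbi
    · intro j hij hstj
      have hbj : b0 j = Letter.star := hstsub j hstj
      by_cases hji0 : j = i0
      · subst hji0; exact absurd hij (not_lt_of_gt hi0i)
      · rw [hbother j hji0] at hbj
        exact hirt j hij hbj
  -- cases on the letter a1 p
  cases hap : a1 p with
  | star => exact absurd hap ha1p
  | one =>
    -- a1 is of type 1 via (1a)
    left; left
    have hcnt1a1 : count1 a1 = count1 b0 + 1 := by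
      have := cnt_update b0 p Letter.one Letter.one
      rw [hap] at ha1eq
      rw [← ha1eq, hbp] at this
      simpa [count1] using this
    exact ⟨hA1.1, hORa1, by omega⟩
  | zero =>
    -- p ≠ i0, else a1 = a0
    have hpi0 : p ≠ i0 := by
      intro h
      apply hstep
      rw [hap] at ha1eq
      rw [ha1eq, h, hb]
      funext j
      by_cases hj : j = i0
      · subst hj; simp [hi00]
      · rw [Function.update_of_ne hj, Function.update_of_ne hj]
    have hap0 : a0 p = Letter.star := by rw [← hbother p hpi0]; exact hbp
    have hpgt : i0 < p := hstar_gt p hap0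
    -- counts of a1
    have hcnt1a1 : count1 a1 = count1 b0 := by
      have := cnt_update b0 p Letter.zero Letter.one
      rw [hap] at ha1eq
      rw [← ha1eq, hbp] at this
      simpa [count1] using this
    have hcnt0a1 : count0 a1 = count0 b0 + 1 := by
      have := cnt_update b0 p Letter.zero Letter.zero
      rw [hap] at ha1eq
      rw [← ha1eq, hbp] at this
      simpa [count0] using this
    have hc1a1 : count1 a1 = m1 := by omega
    have hc0a1 : count0 a1 ≤ m0 := by omega
    -- NoZeroLeft a1
    have ha1i0 : a1 i0 = Letter.star := by
      rw [he i0 (fun h => hpi0 h.symm)]; exact hbi0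
    have hNZL : NoZeroLeft a1 := by
      refine ⟨hasStar_of_pos (by omega), ?_⟩
      intro j hj0
      have hji0 : i0 < j := by
        rcases lt_trichotomy j i0 with h | h | h
        · exfalso
          have hjp : j ≠ p := ne_of_lt (lt_trans h hpgt)
          have hj1 : a1 j = Letter.one := by
            rw [he j hjp, hbother j (ne_of_lt h)]; exact hone j h
          rw [hj1] at hj0; cases hj0
        · rw [h, ha1i0] at hj0; cases hj0
        · exact h
      exact ⟨i0, hji0, ha1i0⟩
    by_cases hc0m0 : count0 a1 = m0
    · left; right; right
      exact ⟨hA1.1, hORa1, hc1a1, hc0m0, hNZL⟩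
    · right
      exact ⟨hc1a1, by omega, hORa1, hNZL⟩
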